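/- Let x, y : ℝ → E be two T-periodic solutions of the sweeping process -x'(t) ∈ N_{C(t)}(x(t)) with C(t) nonempty closed convex and Lipschitz in t (in the Hausdorff metric). Then the distance ‖x(t) - y(t)‖ is constant in t. -/

import Mathlib

open MeasureTheory InnerProductSpace

/-- The normal cone of convex analysis: empty outside `C`. -/
def normalCone {E : Type*} [NormedAddCommGroup E] [InnerProductSpace ℝ E]
    (C : Set E) (x : E) : Set E :=
  {ζ | x ∈ C ∧ ∀ c ∈ C, ⟪ζ, c - x⟫_ℝ ≤ 0}

/-- A solution of the sweeping process `-x'(t) ∈ N_{C(t)}(x(t))`: a Lipschitz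
function satisfying the differential inclusion a.e. -/
def IsSweepingSolution {E : Type*} [NormedAddCommGroup E] [InnerProductSpace ℝ E]
    (C : ℝ → Set E) (x : ℝ → E) : Prop :=
  (∃ K : NNReal, LipschitzWith K x) ∧ (∀ t, x t ∈ C t) ∧
    ∀ᵐ t ∂(volume : Measure ℝ), ∃ v : E, HasDerivAt x v t ∧ -v ∈ normalCone (C t) (x t)

open Set in

/-- A Lipschitz real function whose derivative is a.e. nonpositive is antitone. -/
lemma lipschitz_antitone_of_ae_deriv_nonpos {f : ℝ → ℝ} {K : NNReal}
    (hf : LipschitzWith K f)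
    (hd : ∀ᵐ t ∂(volume : Measure ℝ), ∃ v, HasDerivAt f v t ∧ v ≤ 0) :
    Antitone f := by
  set c : ℝ := (K : ℝ) + 1 with hc
  have hc0 : 0 < c := by positivity
  -- the monotone companion g = f + c * id
  set g : ℝ → ℝ := fun t => f t + c * t with hg
  have hgmono : Monotone g := by
    intro s t hst
    have := hf.dist_le_mul s t
    rw [Real.dist_eq, Real.dist_eq] at this
    have h1 : f s - f t ≤ (K : ℝ) * |s - t| := (abs_le.1 this).2
    have h2 : |s - t| = t - s := by rw [abs_sub_comm, abs_of_nonneg (by linarith)]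
    simp only [hg]
    nlinarith [h1, h2]
  have hgcont : Continuous g := hf.continuous.add (continuous_const.mul continuous_id)
  set S : StieltjesFunction ℝ := ⟨g, hgmono, fun x => hgcont.continuousWithinAt⟩ with hS
  -- Lipschitz bound on increments of g
  have hginc : ∀ a b : ℝ, g b - g a ≤ (2 * c) * (b - a) ∨ g b - g a ≤ 0 := by
    intro a b
    rcases le_total a b with hab | hab
    · left
      have := hf.dist_le_mul b a
      rw [Real.dist_eq, Real.dist_eq] at this
      have h1 : f b - f a ≤ (K : ℝ) * |b - a| := (abs_le.1 this).2
      have h2 : |b - a| = b - a := abs_of_nonneg (by linarith)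
      simp only [hg]; nlinarith
    · right
      have := hgmono hab; linarith
  -- length comparison
  have hlen : ∀ s : Set ℝ, S.length s ≤ ENNReal.ofReal (2 * c) * StieltjesFunction.id.length s := by
    intro s
    have h2c : (ENNReal.ofReal (2 * c)) ≠ 0 := by
      simp [ENNReal.ofReal_eq_zero]; linarith
    have h2c' : (ENNReal.ofReal (2 * c)) ≠ ⊤ := ENNReal.ofReal_ne_top
    rw [show StieltjesFunction.id.length s
        = ⨅ (a : ℝ) (b : ℝ) (_ : s ⊆ Set.Ioc a b), ENNReal.ofReal (b - a) from by
          rw [StieltjesFunction.length_eq]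
          have hb : botSet (R := ℝ) = ∅ := Set.eq_empty_of_forall_notMem fun x hx => not_isBot x hx
          simp only [hb, Set.diff_empty]
          rfl]
    rw [ENNReal.mul_iInf_of_ne h2c h2c']
    refine le_iInf fun a => ?_
    rw [ENNReal.mul_iInf_of_ne h2c h2c']
    refine le_iInf fun b => ?_
    rw [ENNReal.mul_iInf_of_ne h2c h2c']
    refine le_iInf fun hsub => ?_
    calc S.length s ≤ S.length (Set.Ioc a b) := S.length_mono hsub
      _ = ENNReal.ofReal (g b - g a) := S.length_Ioc a b
      _ ≤ ENNReal.ofReal (2 * c * (b - a)) := by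
          rcases hginc a b with h | h
          · exact ENNReal.ofReal_le_ofReal h
          · calc ENNReal.ofReal (g b - g a) = 0 := by simp [ENNReal.ofReal_eq_zero]; linarith
              _ ≤ _ := zero_le
      _ = ENNReal.ofReal (2 * c) * ENNReal.ofReal (b - a) := by
          rcases le_total (b - a) 0 with h | h
          · rw [ENNReal.ofReal_eq_zero.2 h, mul_zero, ENNReal.ofReal_eq_zero.2 (by nlinarith)]
          · rw [← ENNReal.ofReal_mul (by linarith)]
  -- outer measure comparison
  have houter : ∀ s : Set ℝ, S.outer s ≤ ENNReal.ofReal (2 * c) * StieltjesFunction.id.outer s := by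
    intro s
    have h2c : (ENNReal.ofReal (2 * c)) ≠ 0 := by
      simp [ENNReal.ofReal_eq_zero]; linarith
    have h2c' : (ENNReal.ofReal (2 * c)) ≠ ⊤ := ENNReal.ofReal_ne_top
    rw [StieltjesFunction.outer, StieltjesFunction.outer, OuterMeasure.ofFunction_apply,
      OuterMeasure.ofFunction_apply, ENNReal.mul_iInf_of_ne h2c h2c']
    refine le_iInf fun t => ?_
    rw [ENNReal.mul_iInf_of_ne h2c h2c']
    refine le_iInf fun ht => ?_
    calc (⨅ (t' : ℕ → Set ℝ) (_ : s ⊆ Set.iUnion t'), ∑' (n : ℕ), S.length (t' n))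
        ≤ ∑' (n : ℕ), S.length (t n) := iInf₂_le t ht
      _ ≤ ∑' (n : ℕ), ENNReal.ofReal (2 * c) * StieltjesFunction.id.length (t n) :=
          ENNReal.tsum_le_tsum fun n => hlen (t n)
      _ = ENNReal.ofReal (2 * c) * ∑' (n : ℕ), StieltjesFunction.id.length (t n) :=
          ENNReal.tsum_mul_left
  -- absolute continuity
  have hac : S.measure ≪ (volume : Measure ℝ) := by
    refine Measure.AbsolutelyContinuous.mk fun s hs hvs => ?_
    have h1 : S.measure s = S.outer s := by rw [StieltjesFunction.measure]; rfl
    have h2 : StieltjesFunction.id.measure s = StieltjesFunction.id.outer s := by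
      rw [StieltjesFunction.measure]; rfl
    rw [Real.volume_eq_stieltjes_id, h2] at hvs
    rw [h1]
    exact le_antisymm (le_trans (houter s) (by rw [hvs, mul_zero])) zero_le
  -- a.e. the Radon–Nikodym derivative is ≤ c
  have hrn : ∀ᵐ t ∂(volume : Measure ℝ),
      S.measure.rnDeriv volume t ≤ ENNReal.ofReal c := by
    filter_upwards [S.ae_hasDerivAt, hd, Measure.rnDeriv_lt_top S.measure volume] with t h1 h2 h3
    obtain ⟨v, hv, hv0⟩ := h2
    have hgd : HasDerivAt g (v + c) t := by
      have h := hv.add ((hasDerivAt_id t).const_mul c)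
      rw [mul_one] at h
      exact h
    have : (S.measure.rnDeriv volume t).toReal = v + c := h1.unique hgd
    rw [← ENNReal.ofReal_toReal h3.ne, this]
    exact ENNReal.ofReal_le_ofReal (by linarith)
  -- conclude
  intro a b hab
  have key : ENNReal.ofReal (g b - g a) ≤ ENNReal.ofReal (c * (b - a)) := by
    have h1 : ENNReal.ofReal (g b - g a) = S.measure (Set.Ioc a b) :=
      (S.measure_Ioc a b).symm
    have h2 : S.measure (Set.Ioc a b)
        = ∫⁻ t in Set.Ioc a b, S.measure.rnDeriv volume t ∂(volume : Measure ℝ) := by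
      conv_lhs => rw [← Measure.withDensity_rnDeriv_eq S.measure volume hac]
      rw [withDensity_apply _ measurableSet_Ioc]
    rw [h1, h2]
    calc (∫⁻ t in Set.Ioc a b, S.measure.rnDeriv volume t ∂(volume : Measure ℝ))
        ≤ ∫⁻ _ in Set.Ioc a b, ENNReal.ofReal c ∂(volume : Measure ℝ) := by
          refine setLIntegral_mono_ae aemeasurable_const ?_
          filter_upwards [hrn] with t ht _ using ht
      _ = ENNReal.ofReal c * volume (Set.Ioc a b) := setLIntegral_const _ _
      _ = ENNReal.ofReal (c * (b - a)) := by
          rw [Real.volume_Ioc, ← ENNReal.ofReal_mul hc0.le]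
  have hfin : g b - g a ≤ c * (b - a) := by
    rcases le_total (g b - g a) 0 with h | h
    · nlinarith
    · have := (ENNReal.ofReal_le_ofReal_iff (by nlinarith)).1 key
      linarith
  simp only [hg] at hfin
  linarith

theorem stmt_1 {E : Type*} [NormedAddCommGroup E] [InnerProductSpace ℝ E]
    [FiniteDimensional ℝ E]
    (T : ℝ) (hT : 0 < T) (C : ℝ → Set E)
    (hne : ∀ t, (C t).Nonempty) (hcl : ∀ t, IsClosed (C t)) (hcv : ∀ t, Convex ℝ (C t))
    (L : ℝ) (hL : 0 ≤ L)
    (hLip : ∀ s t : ℝ, Metric.hausdorffDist (C s) (C t) ≤ L * |s - t|)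
    (x y : ℝ → E) (hx : IsSweepingSolution C x) (hy : IsSweepingSolution C y)
    (hxT : ∀ t, x (t + T) = x t) (hyT : ∀ t, y (t + T) = y t) :
    ∀ s t : ℝ, ‖x s - y s‖ = ‖x t - y t‖ := by
  obtain ⟨⟨Kx, hKx⟩, hxC, hxD⟩ := hx
  obtain ⟨⟨Ky, hKy⟩, hyC, hyD⟩ := hy
  set p : ℝ → E := fun t => x t - y t with hp
  have hpper : Function.Periodic p T := fun t => by simp only [hp]; rw [hxT t, hyT t]
  have hplip : LipschitzWith (Kx + Ky) p := hKx.sub hKy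
  have hpcont : Continuous p := hplip.continuous
  -- p is bounded, by periodicity and continuity
  obtain ⟨M, hM0, hM⟩ : ∃ M, 0 ≤ M ∧ ∀ t, ‖p t‖ ≤ M := by
    obtain ⟨M, hM⟩ := isCompact_Icc.exists_bound_of_continuousOn
      (s := Set.Icc (0:ℝ) T) hpcont.continuousOn
    refine ⟨M, le_trans (norm_nonneg (p 0)) (hM 0 ⟨le_refl _, hT.le⟩), fun t => ?_⟩
    obtain ⟨s, hs, hps⟩ := hpper.exists_mem_Ico₀ hT t
    rw [hps]; exact hM s ⟨hs.1, hs.2.le⟩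
  -- the squared distance function
  set φ : ℝ → ℝ := fun t => ⟪p t, p t⟫_ℝ with hφ
  have hφper : ∀ t, φ (t + T) = φ t := fun t => by simp only [hφ, hpper t]
  -- φ is Lipschitz
  have hφlip : LipschitzWith (2 * Real.toNNReal M * (Kx + Ky)) φ := by
    refine LipschitzWith.of_dist_le_mul fun s t => ?_
    have key : φ s - φ t = ⟪p s - p t, p s + p t⟫_ℝ := by
      simp only [hφ, inner_sub_left, inner_add_right]
      rw [real_inner_comm (p t) (p s)]
      ring
    rw [Real.dist_eq, key]
    calc |⟪p s - p t, p s + p t⟫_ℝ| ≤ ‖p s - p t‖ * ‖p s + p t‖ := abs_real_inner_le_norm _ _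
      _ ≤ ((Kx : ℝ) + Ky) * dist s t * (2 * M) := by
          refine mul_le_mul ?_ ?_ (norm_nonneg _) (by positivity)
          · have := hplip.dist_le_mul s t
            rwa [dist_eq_norm, NNReal.coe_add] at this
          · calc ‖p s + p t‖ ≤ ‖p s‖ + ‖p t‖ := norm_add_le _ _
              _ ≤ 2 * M := by have := hM s; have := hM t; linarith
      _ = ↑(2 * Real.toNNReal M * (Kx + Ky)) * dist s t := by
          push_cast [Real.coe_toNNReal M hM0]; ring
  -- φ has a.e. nonpositive derivative
  have hφD : ∀ᵐ t ∂(volume : Measure ℝ), ∃ v, HasDerivAt φ v t ∧ v ≤ 0 := by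
    filter_upwards [hxD, hyD] with t ⟨u, hu, hun⟩ ⟨v, hv, hvn⟩
    have hpd : HasDerivAt p (u - v) t := hu.sub hv
    refine ⟨⟪p t, u - v⟫_ℝ + ⟪u - v, p t⟫_ℝ, HasDerivAt.inner ℝ hpd hpd, ?_⟩
    obtain ⟨hxm, hxineq⟩ := hun
    obtain ⟨hym, hyineq⟩ := hvn
    have h1 : ⟪-u, y t - x t⟫_ℝ ≤ 0 := hxineq (y t) (hyC t)
    have h2 : ⟪-v, x t - y t⟫_ℝ ≤ 0 := hyineq (x t) (hxC t)
    have e1 : ⟪-u, y t - x t⟫_ℝ = - ⟪u, y t - x t⟫_ℝ := by rw [inner_neg_left]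
    have e2 : ⟪-v, x t - y t⟫_ℝ = - ⟪v, x t - y t⟫_ℝ := by rw [inner_neg_left]
    have e3 : ⟪u, y t - x t⟫_ℝ = - ⟪u, x t - y t⟫_ℝ := by
      rw [show y t - x t = -(x t - y t) by abel, inner_neg_right]
    have e4 : ⟪p t, u - v⟫_ℝ = ⟪u - v, p t⟫_ℝ := real_inner_comm _ _
    have e5 : ⟪u - v, p t⟫_ℝ = ⟪u, x t - y t⟫_ℝ - ⟪v, x t - y t⟫_ℝ := by
      simp only [hp, inner_sub_left]
    rw [e4, e5]
    rw [e1, e3] at h1; rw [e2] at h2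
    linarith
  have hφanti : Antitone φ := lipschitz_antitone_of_ae_deriv_nonpos hφlip hφD
  -- antitone + periodic ⇒ constant
  have hconst : ∀ s t : ℝ, s ≤ t → φ s = φ t := by
    intro s t hst
    refine le_antisymm ?_ (hφanti hst)
    obtain ⟨n, hn⟩ := exists_nat_ge ((t - s) / T)
    have hnT : t ≤ s + n * T := by
      have := (div_le_iff₀ hT).1 hn
      linarith
    have hper : ∀ m : ℕ, φ (s + m * T) = φ s := by
      intro m
      induction m with
      | zero => simp
      | succ k ih =>
        have heq : s + (k + 1 : ℕ) * T = (s + k * T) + T := by push_cast; ring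
        rw [heq, hφper, ih]
    calc φ s = φ (s + n * T) := (hper n).symm
      _ ≤ φ t := hφanti hnT
  have hφnorm : ∀ t, φ t = ‖p t‖ ^ 2 := fun t => by
    rw [hφ]; exact real_inner_self_eq_norm_sq _
  intro s t
  rcases le_total s t with h | h
  · have := hconst s t h
    rw [hφnorm s, hφnorm t] at this
    have := congrArg Real.sqrt this
    rw [Real.sqrt_sq (norm_nonneg _), Real.sqrt_sq (norm_nonneg _)] at this
    exact this
  · have := hconst t s h
    rw [hφnorm t, hφnorm s] at this
    have := congrArg Real.sqrt this
    rw [Real.sqrt_sq (norm_nonneg _), Real.sqrt_sq (norm_nonneg _)] at this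
    exact this.symm
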